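/- arXiv:math-ph/0108003 — 2 statements merged into one kernel-verified Lean document; each statement's English description precedes it below -/
import Mathlib

section
/- For q > 1 there exist positive constants C₁, C₂, C₃, k (depending only on q) such that for all sufficiently small t > 0, C₁ t^{-1/2}(exp(k/t) - C₃) < ∑_{m=1}^{∞} ([m]_q)^2 exp(-t((m+1)/2)^2) < C₂ t^{-1/2} exp(k/t). -/
open Real Filter Set

/-- The q-number [x]_q = (q^x - q^{-x})/(q - q⁻¹). -/
noncomputable def qnum (q x : ℝ) : ℝ := (q ^ x - q ^ (-x)) / (q - q⁻¹)

lemma gauss_summable {c : ℝ} (hc : 0 < c) (r : ℝ) :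
    Summable (fun m : ℕ => Real.exp (-c * ((m : ℝ) + r) ^ 2)) := by
  refine Summable.of_nonneg_of_le (fun m => (Real.exp_pos _).le) (fun m => ?_)
    (((summable_geometric_of_lt_one (Real.exp_nonneg _)
      (Real.exp_lt_one_iff.2 (by linarith : -c < 0)))).mul_left (Real.exp (c / 4 - c * r)))
  rw [← Real.exp_nat_mul, ← Real.exp_add]
  apply Real.exp_le_exp.2
  have hm : (0:ℝ) ≤ (m:ℝ) := Nat.cast_nonneg m
  nlinarith [sq_nonneg ((m : ℝ) + r - 1/2)]

lemma one_sub_exp_neg (x : ℝ) (h0 : 0 ≤ x) (h1 : x ≤ 1) : x / 2 ≤ 1 - Real.exp (-x) := by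
  have h2 : 1 + x ≤ Real.exp x := by linarith [Real.add_one_le_exp x]
  have h3 : Real.exp (-x) = (Real.exp x)⁻¹ := Real.exp_neg x
  have h4 : 0 < Real.exp x := Real.exp_pos x
  have h5 : Real.exp (-x) ≤ (1 + x)⁻¹ := by
    rw [h3]
    exact inv_anti₀ (by linarith) h2
  have h6 : (1 + x)⁻¹ ≤ 1 - x / 2 := by
    rw [inv_le_iff_one_le_mul₀ (by linarith)]
    nlinarith
  linarith

lemma gauss_tsum_upper {c : ℝ} (hc : 0 < c) (hc1 : c ≤ 1) :
    ∑' j : ℕ, Real.exp (-c * (j : ℝ) ^ 2) ≤ 4 * (Real.sqrt c)⁻¹ := by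
  have hs : 0 < Real.sqrt c := Real.sqrt_pos.2 hc
  have hs1 : Real.sqrt c ≤ 1 := by
    rw [show (1:ℝ) = Real.sqrt 1 by simp]; exact Real.sqrt_le_sqrt hc1
  have hsi : 1 ≤ (Real.sqrt c)⁻¹ := (one_le_inv_iff₀).2 ⟨hs, hs1⟩
  set J : ℕ := ⌈(Real.sqrt c)⁻¹⌉₊ with hJ
  have hJ1 : (Real.sqrt c)⁻¹ ≤ (J : ℝ) := Nat.le_ceil _
  have hJ2 : (J : ℝ) ≤ 2 * (Real.sqrt c)⁻¹ := by
    have := Nat.ceil_lt_add_one (by positivity : (0:ℝ) ≤ (Real.sqrt c)⁻¹)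
    linarith
  have hsum : Summable (fun j : ℕ => Real.exp (-c * (j : ℝ) ^ 2)) := by
    have := gauss_summable hc 0
    simpa using this
  rw [← hsum.sum_add_tsum_nat_add J]
  have head : ∑ j ∈ Finset.range J, Real.exp (-c * (j : ℝ) ^ 2) ≤ (J : ℝ) := by
    calc ∑ j ∈ Finset.range J, Real.exp (-c * (j : ℝ) ^ 2)
        ≤ ∑ j ∈ Finset.range J, 1 := by
          apply Finset.sum_le_sum
          intro i _
          rw [Real.exp_le_one_iff]
          nlinarith [sq_nonneg (i:ℝ), Nat.cast_nonneg (α := ℝ) i]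
      _ = (J : ℝ) := by simp
  have hcJ : Real.sqrt c ≤ c * J := by
    have h : c * (Real.sqrt c)⁻¹ = Real.sqrt c := by
      rw [← Real.mul_self_sqrt hc.le]; field_simp; rw [Real.sqrt_sq hs.le]
    have h2 : c * (Real.sqrt c)⁻¹ ≤ c * J := by nlinarith
    linarith
  have tail : ∑' j : ℕ, Real.exp (-c * ((j : ℝ) + J) ^ 2) ≤ 2 * (Real.sqrt c)⁻¹ := by
    have hterm : ∀ j : ℕ, Real.exp (-c * ((j : ℝ) + J) ^ 2) ≤ Real.exp (-(c * J)) ^ j := by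
      intro j
      rw [← Real.exp_nat_mul]
      apply Real.exp_le_exp.2
      have : (0:ℝ) ≤ c * J := by positivity
      have hj : (0:ℝ) ≤ (j:ℝ) := Nat.cast_nonneg j
      have hJn : (0:ℝ) ≤ (J:ℝ) := Nat.cast_nonneg J
      nlinarith [sq_nonneg (j:ℝ), sq_nonneg (J:ℝ), mul_nonneg hj hJn]
    have hlt : Real.exp (-(c * J)) < 1 := by
      rw [Real.exp_lt_one_iff]
      have : 0 < c * J := lt_of_lt_of_le hs hcJ
      linarith
    calc ∑' j : ℕ, Real.exp (-c * ((j : ℝ) + J) ^ 2)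
        ≤ ∑' j : ℕ, Real.exp (-(c * J)) ^ j := by
          apply Summable.tsum_le_tsum hterm
          · exact (gauss_summable hc J).congr (fun j => by push_cast; ring_nf)
          · exact summable_geometric_of_lt_one (Real.exp_nonneg _) hlt
      _ = (1 - Real.exp (-(c * J)))⁻¹ := tsum_geometric_of_lt_one (Real.exp_nonneg _) hlt
      _ ≤ 2 * (Real.sqrt c)⁻¹ := by
          have h1 : Real.sqrt c / 2 ≤ 1 - Real.exp (-(Real.sqrt c)) := one_sub_exp_neg _ hs.le hs1
          have h2 : Real.exp (-(c * J)) ≤ Real.exp (-(Real.sqrt c)) := by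
            apply Real.exp_le_exp.2; linarith
          have h3 : Real.sqrt c / 2 ≤ 1 - Real.exp (-(c * J)) := by linarith
          rw [inv_le_iff_one_le_mul₀ (by linarith)]
          have : 2 * (Real.sqrt c)⁻¹ * (Real.sqrt c / 2) = 1 := by
            field_simp
          nlinarith [mul_le_mul_of_nonneg_left h3 (by positivity : (0:ℝ) ≤ 2 * (Real.sqrt c)⁻¹)]
  have hg : ∀ j : ℕ, Real.exp (-c * ((j : ℝ) + J) ^ 2) = Real.exp (-c * ((j + J : ℕ) : ℝ) ^ 2) := by
    intro j; push_cast; ring_nf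
  calc ∑ j ∈ Finset.range J, Real.exp (-c * (j : ℝ) ^ 2)
        + ∑' j : ℕ, Real.exp (-c * ((j + J : ℕ) : ℝ) ^ 2)
      ≤ (J : ℝ) + 2 * (Real.sqrt c)⁻¹ := by
        apply add_le_add head
        calc ∑' j : ℕ, Real.exp (-c * ((j + J : ℕ) : ℝ) ^ 2)
            = ∑' j : ℕ, Real.exp (-c * ((j : ℝ) + J) ^ 2) := by
              apply tsum_congr; intro j; rw [hg]
          _ ≤ 2 * (Real.sqrt c)⁻¹ := tail
    _ ≤ 4 * (Real.sqrt c)⁻¹ := by linarith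

lemma gauss_shift_upper {c : ℝ} (hc : 0 < c) (hc1 : c ≤ 1) {a : ℝ} (ha : 2 ≤ a) :
    ∑' m : ℕ, Real.exp (-c * ((m : ℝ) + 2 - a) ^ 2) ≤ 8 * (Real.sqrt c)⁻¹ := by
  have hsum : Summable (fun m : ℕ => Real.exp (-c * ((m : ℝ) + 2 - a) ^ 2)) :=
    (gauss_summable hc (2 - a)).congr (fun m => by ring_nf)
  have hcent : Summable (fun j : ℕ => Real.exp (-c * (j : ℝ) ^ 2)) := by
    simpa using gauss_summable hc 0
  set N : ℕ := ⌊a⌋₊ with hN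
  have hN2 : 2 ≤ N := Nat.le_floor ha
  have hNa : (N : ℝ) ≤ a := Nat.floor_le (by linarith)
  have hNa2 : a < (N : ℝ) + 1 := Nat.lt_floor_add_one a
  set M : ℕ := N - 2 with hM
  have hMN : (M : ℝ) = (N : ℝ) - 2 := by
    rw [hM, Nat.cast_sub hN2]; norm_num
  rw [← hsum.sum_add_tsum_nat_add (M + 1)]
  have head : ∑ m ∈ Finset.range (M + 1), Real.exp (-c * ((m : ℝ) + 2 - a) ^ 2)
      ≤ ∑' j : ℕ, Real.exp (-c * (j : ℝ) ^ 2) := by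
    have step : ∑ m ∈ Finset.range (M + 1), Real.exp (-c * ((m : ℝ) + 2 - a) ^ 2)
        ≤ ∑ m ∈ Finset.range (M + 1), Real.exp (-c * ((M : ℝ) - m) ^ 2) := by
      apply Finset.sum_le_sum
      intro m hm
      have hm' : (m : ℝ) ≤ (M : ℝ) := by
        exact_mod_cast Nat.lt_succ_iff.1 (Finset.mem_range.1 hm)
      apply Real.exp_le_exp.2
      have h1 : (M : ℝ) - m ≤ a - ((m:ℝ) + 2) := by rw [hMN]; linarith
      have h2 : (0:ℝ) ≤ (M : ℝ) - m := by linarith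
      have h3 : ((M:ℝ) - m)^2 ≤ (a - ((m:ℝ)+2))^2 := by
        nlinarith [mul_le_mul h1 h1 h2 (h2.trans h1)]
      nlinarith [mul_le_mul_of_nonneg_left h3 hc.le]
    refine step.trans ?_
    have refl : ∑ m ∈ Finset.range (M + 1), Real.exp (-c * ((M : ℝ) - m) ^ 2)
        = ∑ j ∈ Finset.range (M + 1), Real.exp (-c * (j : ℝ) ^ 2) := by
      rw [← Finset.sum_range_reflect (fun j => Real.exp (-c * (j : ℝ) ^ 2)) (M + 1)]
      apply Finset.sum_congr rfl
      intro m hm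
      have hm' : m ≤ M := Nat.lt_succ_iff.1 (Finset.mem_range.1 hm)
      have hcast : ((M + 1 - 1 - m : ℕ) : ℝ) = (M:ℝ) - m := by
        rw [Nat.add_sub_cancel, Nat.cast_sub hm']
      rw [hcast]
    rw [refl]
    exact hcent.sum_le_tsum _ (fun i _ => (Real.exp_pos _).le)
  have tail : ∑' j : ℕ, Real.exp (-c * (((j + (M + 1) : ℕ) : ℝ) + 2 - a) ^ 2)
      ≤ ∑' j : ℕ, Real.exp (-c * (j : ℝ) ^ 2) := by
    apply Summable.tsum_le_tsum _ (hsum.comp_injective (add_left_injective (M+1))) hcent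
    intro j
    apply Real.exp_le_exp.2
    have h1 : (j : ℝ) ≤ ((j + (M + 1) : ℕ) : ℝ) + 2 - a := by
      push_cast
      rw [hMN]
      linarith
    have hj : (0:ℝ) ≤ (j:ℝ) := Nat.cast_nonneg j
    have h3 : (j:ℝ)^2 ≤ (((j + (M + 1) : ℕ) : ℝ) + 2 - a)^2 := by
      nlinarith [mul_le_mul h1 h1 hj (hj.trans h1)]
    nlinarith [mul_le_mul_of_nonneg_left h3 hc.le]
  have := gauss_tsum_upper hc hc1
  linarith

lemma gauss_shift_lower {c : ℝ} (hc : 0 < c) (hc4 : c ≤ 1/4) {a : ℝ} (ha : 2 ≤ a) :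
    Real.exp (-1) / 2 * (Real.sqrt c)⁻¹ ≤ ∑' m : ℕ, Real.exp (-c * ((m : ℝ) + 2 - a) ^ 2) := by
  have hsum : Summable (fun m : ℕ => Real.exp (-c * ((m : ℝ) + 2 - a) ^ 2)) :=
    (gauss_summable hc (2 - a)).congr (fun m => by ring_nf)
  have hs : 0 < Real.sqrt c := Real.sqrt_pos.2 hc
  have hs2 : Real.sqrt c ≤ 1/2 := by
    rw [show (1:ℝ)/2 = Real.sqrt (1/4) by
      rw [show (1:ℝ)/4 = (1/2)^2 by norm_num, Real.sqrt_sq (by norm_num)]]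
    exact Real.sqrt_le_sqrt hc4
  have hsi : 2 ≤ (Real.sqrt c)⁻¹ := by
    rw [le_inv_comm₀ (by norm_num) hs]
    linarith [hs2]
  set N : ℕ := ⌈a⌉₊ with hN
  have hN2 : 2 ≤ N := by
    have h := Nat.le_ceil a
    have h2 : (2:ℝ) ≤ (N:ℝ) := le_trans ha h
    exact_mod_cast h2
  have hNa : a ≤ (N : ℝ) := Nat.le_ceil a
  have hNa2 : (N : ℝ) < a + 1 := by
    have := Nat.ceil_lt_add_one (by linarith : (0:ℝ) ≤ a)
    exact this
  set K : ℕ := ⌊(Real.sqrt c)⁻¹⌋₊ with hK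
  have hK1 : (K : ℝ) ≤ (Real.sqrt c)⁻¹ := Nat.floor_le (by positivity)
  have hK2 : (Real.sqrt c)⁻¹ - 1 < (K : ℝ) := by
    have := Nat.lt_floor_add_one (Real.sqrt c)⁻¹
    linarith
  set M : ℕ := N - 2 with hM
  have hMN : (M : ℝ) = (N : ℝ) - 2 := by
    rw [hM, Nat.cast_sub hN2]; norm_num
  have key : ∀ i ∈ Finset.range K,
      Real.exp (-1) ≤ Real.exp (-c * (((i + M : ℕ) : ℝ) + 2 - a) ^ 2) := by
    intro i hi
    have hiK : (i : ℝ) + 1 ≤ K := by exact_mod_cast Finset.mem_range.1 hi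
    apply Real.exp_le_exp.2
    have hx : ((i + M : ℕ) : ℝ) + 2 - a = (i : ℝ) + (N : ℝ) - a := by
      push_cast; rw [hMN]; ring
    rw [hx]
    have h0 : 0 ≤ (i : ℝ) + N - a := by linarith [Nat.cast_nonneg (α := ℝ) i]
    have h1 : (i : ℝ) + N - a ≤ (Real.sqrt c)⁻¹ := by linarith
    have hsq : ((i : ℝ) + N - a) ^ 2 ≤ ((Real.sqrt c)⁻¹) ^ 2 := by
      apply pow_le_pow_left₀ h0 h1
    have hcinv : ((Real.sqrt c)⁻¹) ^ 2 = c⁻¹ := by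
      rw [← Real.sqrt_inv, Real.sq_sqrt (by positivity)]
    rw [hcinv] at hsq
    have : c * ((i : ℝ) + N - a) ^ 2 ≤ 1 := by
      calc c * ((i : ℝ) + N - a) ^ 2 ≤ c * c⁻¹ := by nlinarith
        _ = 1 := mul_inv_cancel₀ (ne_of_gt hc)
    linarith
  have sub : ∑ i ∈ Finset.range K, Real.exp (-c * (((i + M : ℕ) : ℝ) + 2 - a) ^ 2)
      ≤ ∑' m : ℕ, Real.exp (-c * ((m : ℝ) + 2 - a) ^ 2) := by
    rw [← hsum.sum_add_tsum_nat_add M]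
    have h1 : ∑ i ∈ Finset.range K, Real.exp (-c * (((i + M : ℕ) : ℝ) + 2 - a) ^ 2)
        ≤ ∑' i : ℕ, Real.exp (-c * (((i + M : ℕ) : ℝ) + 2 - a) ^ 2) :=
      (hsum.comp_injective (add_left_injective M)).sum_le_tsum _ (fun i _ => (Real.exp_pos _).le)
    have h2 : 0 ≤ ∑ m ∈ Finset.range M, Real.exp (-c * ((m : ℝ) + 2 - a) ^ 2) :=
      Finset.sum_nonneg (fun i _ => (Real.exp_pos _).le)
    linarith
  have lower : Real.exp (-1) / 2 * (Real.sqrt c)⁻¹ ≤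
      ∑ i ∈ Finset.range K, Real.exp (-c * (((i + M : ℕ) : ℝ) + 2 - a) ^ 2) := by
    calc Real.exp (-1) / 2 * (Real.sqrt c)⁻¹
        ≤ Real.exp (-1) * K := by
          have hKbig : (Real.sqrt c)⁻¹ / 2 ≤ (K : ℝ) := by linarith
          have := mul_le_mul_of_nonneg_left hKbig (Real.exp_nonneg (-1))
          linarith [this]
      _ = ∑ i ∈ Finset.range K, Real.exp (-1) := by
          rw [Finset.sum_const, Finset.card_range]; ring
      _ ≤ _ := Finset.sum_le_sum key
  linarith

lemma qnum_sq_bounds {q : ℝ} (hq : 1 < q) {x : ℝ} (hx : 1 ≤ x) :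
    (1 - q⁻¹ ^ 2) ^ 2 / (q - q⁻¹) ^ 2 * Real.exp (2 * Real.log q * x) ≤ qnum q x ^ 2 ∧
    qnum q x ^ 2 ≤ 1 / (q - q⁻¹) ^ 2 * Real.exp (2 * Real.log q * x) := by
  have hq0 : 0 < q := by linarith
  have hL0 : 0 < Real.log q := Real.log_pos hq
  set L := Real.log q with hLdef
  have hx0 : 0 < x := by linarith
  have hu : q ^ x = Real.exp (L * x) := Real.rpow_def_of_pos hq0 x
  have hun : q ^ (-x) = (Real.exp (L * x))⁻¹ := by
    rw [Real.rpow_def_of_pos hq0, mul_neg, Real.exp_neg]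
  set u := Real.exp (L * x) with hudef
  have hu1 : 1 < u := by
    rw [hudef, show (1:ℝ) = Real.exp 0 by simp]
    exact Real.exp_lt_exp.2 (by positivity)
  have hu0 : 0 < u := lt_trans one_pos hu1
  have huq : q ≤ u := by
    calc q = Real.exp L := (Real.exp_log hq0).symm
      _ ≤ u := Real.exp_le_exp.2 (by nlinarith)
  have hqi : q⁻¹ < 1 := by
    rw [inv_lt_one_iff₀]; right; exact hq
  have hqi0 : 0 < q⁻¹ := inv_pos.2 hq0
  have hD : 0 < q - q⁻¹ := by linarith
  have hui0 : 0 < u⁻¹ := inv_pos.2 hu0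
  have hiu : u⁻¹ ≤ q⁻¹ := inv_anti₀ hq0 huq
  have hui1 : u⁻¹ < 1 := by
    rw [inv_lt_one_iff₀]; right; exact hu1
  have hE2 : Real.exp (2 * L * x) = u ^ 2 := by
    rw [hudef, sq, ← Real.exp_add]; ring_nf
  have hmu : u * u⁻¹ = 1 := mul_inv_cancel₀ (ne_of_gt hu0)
  have hqmu : q * q⁻¹ = 1 := mul_inv_cancel₀ (ne_of_gt hq0)
  have hiu2 : u⁻¹ ^ 2 ≤ q⁻¹ ^ 2 := pow_le_pow_left₀ hui0.le hiu 2
  have hq2 : q⁻¹ ^ 2 < 1 := pow_lt_one₀ hqi0.le hqi (by norm_num)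
  unfold qnum
  rw [hu, hun, div_pow, hE2]
  constructor
  · have h1 : (1 - q⁻¹ ^ 2) * u ≤ u - u⁻¹ := by
      have h2 : u * u⁻¹ ^ 2 = u⁻¹ := by
        rw [sq, ← mul_assoc, hmu, one_mul]
      nlinarith [mul_le_mul_of_nonneg_left hiu2 hu0.le]
    have h0 : 0 ≤ (1 - q⁻¹ ^ 2) * u := by nlinarith
    have key : ((1 - q⁻¹ ^ 2) * u) ^ 2 ≤ (u - u⁻¹) ^ 2 := pow_le_pow_left₀ h0 h1 2
    calc (1 - q⁻¹ ^ 2) ^ 2 / (q - q⁻¹) ^ 2 * u ^ 2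
        = ((1 - q⁻¹ ^ 2) * u) ^ 2 / (q - q⁻¹) ^ 2 := by ring
      _ ≤ (u - u⁻¹) ^ 2 / (q - q⁻¹) ^ 2 := by gcongr
  · have h1 : u - u⁻¹ ≤ u := by linarith
    have h0 : 0 ≤ u - u⁻¹ := by nlinarith
    have key : (u - u⁻¹) ^ 2 ≤ u ^ 2 := pow_le_pow_left₀ h0 h1 2
    calc (u - u⁻¹) ^ 2 / (q - q⁻¹) ^ 2
        ≤ u ^ 2 / (q - q⁻¹) ^ 2 := by gcongr
      _ = 1 / (q - q⁻¹) ^ 2 * u ^ 2 := by ring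

/-- For q > 1 there are positive constants C₁, C₂, C₃, k depending only on q such that for all
sufficiently small t > 0,
C₁ t^{-1/2}(exp(k/t) - C₃) < ∑_{m=1}^∞ ([m]_q)² exp(-t((m+1)/2)²) < C₂ t^{-1/2} exp(k/t). -/
theorem stmt5 (q : ℝ) (hq : 1 < q) :
    ∃ C₁ C₂ C₃ k : ℝ, 0 < C₁ ∧ 0 < C₂ ∧ 0 < C₃ ∧ 0 < k ∧
      ∀ᶠ t in nhdsWithin (0 : ℝ) (Ioi 0),
        C₁ * t ^ (-(1 : ℝ) / 2) * (Real.exp (k / t) - C₃) <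
          (∑' m : ℕ, (qnum q ((m : ℝ) + 1)) ^ 2 *
            Real.exp (-t * ((((m : ℝ) + 1) + 1) / 2) ^ 2)) ∧
        (∑' m : ℕ, (qnum q ((m : ℝ) + 1)) ^ 2 *
            Real.exp (-t * ((((m : ℝ) + 1) + 1) / 2) ^ 2)) <
          C₂ * t ^ (-(1 : ℝ) / 2) * Real.exp (k / t) := by
  have hq0 : 0 < q := by linarith
  have hL0 : 0 < Real.log q := Real.log_pos hq
  set L := Real.log q with hLdef
  have hqi : q⁻¹ < 1 := by rw [inv_lt_one_iff₀]; right; exact hq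
  have hD : 0 < q - q⁻¹ := by linarith
  have hq2 : q⁻¹ ^ 2 < 1 := pow_lt_one₀ (by positivity) hqi (by norm_num)
  set b₁ : ℝ := (1 - q⁻¹ ^ 2) ^ 2 / (q - q⁻¹) ^ 2 with hb₁def
  set b₂ : ℝ := 1 / (q - q⁻¹) ^ 2 with hb₂def
  have hb₁ : 0 < b₁ := by
    rw [hb₁def]
    have : 0 < 1 - q⁻¹ ^ 2 := by linarith
    positivity
  have hb₂ : 0 < b₂ := by rw [hb₂def]; positivity
  refine ⟨b₁ * Real.exp (-(2 * L)) * Real.exp (-1), 16 * b₂ * Real.exp (-(2 * L)) + 1, 1,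
    4 * L ^ 2, by positivity, by positivity, one_pos, by positivity, ?_⟩
  set C₁ : ℝ := b₁ * Real.exp (-(2 * L)) * Real.exp (-1) with hC₁def
  set k : ℝ := 4 * L ^ 2 with hkdef
  filter_upwards [Ioo_mem_nhdsGT_of_mem
    (show (0:ℝ) ∈ Ico 0 (min 1 (2 * L)) from ⟨le_refl 0, lt_min one_pos (by linarith)⟩)]
    with t ht
  obtain ⟨ht0, htm⟩ := ht
  have ht1 : t < 1 := lt_of_lt_of_le htm (min_le_left _ _)
  have ht2 : t < 2 * L := lt_of_lt_of_le htm (min_le_right _ _)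
  set c : ℝ := t / 4 with hcdef
  set a : ℝ := 4 * L / t with hadef
  have hc : 0 < c := by rw [hcdef]; linarith
  have hc1 : c ≤ 1 := by rw [hcdef]; linarith
  have hc4 : c ≤ 1 / 4 := by rw [hcdef]; linarith
  have ha : 2 ≤ a := by
    rw [hadef, le_div_iff₀ ht0]; linarith
  set E : ℝ := Real.exp (k / t) * Real.exp (-(2 * L)) with hEdef
  have hE : 0 < E := by positivity
  set g : ℕ → ℝ := fun m => Real.exp (-c * ((m : ℝ) + 2 - a) ^ 2) with hgdef
  set F : ℕ → ℝ := fun m => (qnum q ((m : ℝ) + 1)) ^ 2 *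
    Real.exp (-t * ((((m : ℝ) + 1) + 1) / 2) ^ 2) with hFdef
  have hid : ∀ m : ℕ, Real.exp (2 * L * ((m : ℝ) + 1)) *
      Real.exp (-t * ((((m : ℝ) + 1) + 1) / 2) ^ 2) = E * g m := by
    intro m
    rw [hEdef, hgdef, ← Real.exp_add, mul_assoc]
    rw [← Real.exp_add, ← Real.exp_add]
    congr 1
    rw [hkdef, hcdef, hadef]
    field_simp
    ring
  have hbound : ∀ m : ℕ, b₁ * E * g m ≤ F m ∧ F m ≤ b₂ * E * g m := by
    intro m
    have hx : (1:ℝ) ≤ (m : ℝ) + 1 := by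
      have : (0:ℝ) ≤ (m:ℝ) := Nat.cast_nonneg m
      linarith
    obtain ⟨hl, hr⟩ := qnum_sq_bounds hq hx
    have hep : 0 < Real.exp (-t * ((((m : ℝ) + 1) + 1) / 2) ^ 2) := Real.exp_pos _
    constructor
    · calc b₁ * E * g m = b₁ * (E * g m) := by ring
        _ = b₁ * (Real.exp (2 * L * ((m : ℝ) + 1)) *
            Real.exp (-t * ((((m : ℝ) + 1) + 1) / 2) ^ 2)) := by rw [hid m]
        _ = (b₁ * Real.exp (2 * L * ((m : ℝ) + 1))) *
            Real.exp (-t * ((((m : ℝ) + 1) + 1) / 2) ^ 2) := by ring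
        _ ≤ F m := by
            rw [hFdef]
            exact mul_le_mul_of_nonneg_right hl hep.le
    · calc F m ≤ (b₂ * Real.exp (2 * L * ((m : ℝ) + 1))) *
            Real.exp (-t * ((((m : ℝ) + 1) + 1) / 2) ^ 2) := by
            rw [hFdef]
            exact mul_le_mul_of_nonneg_right hr hep.le
        _ = b₂ * (Real.exp (2 * L * ((m : ℝ) + 1)) *
            Real.exp (-t * ((((m : ℝ) + 1) + 1) / 2) ^ 2)) := by ring
        _ = b₂ * E * g m := by rw [hid m]; ring
  have hgsum : Summable g := (gauss_summable hc (2 - a)).congr (fun m => by rw [hgdef]; ring_nf)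
  have hFsum : Summable F := by
    apply Summable.of_nonneg_of_le (fun m => ?_) (fun m => (hbound m).2)
      ((hgsum.mul_left (b₂ * E)).congr (fun m => by ring))
    rw [hFdef]
    positivity
  have hgup : ∑' m, g m ≤ 8 * (Real.sqrt c)⁻¹ := gauss_shift_upper hc hc1 ha
  have hglo : Real.exp (-1) / 2 * (Real.sqrt c)⁻¹ ≤ ∑' m, g m := gauss_shift_lower hc hc4 ha
  have htsum_up : ∑' m, F m ≤ b₂ * E * (8 * (Real.sqrt c)⁻¹) := by
    calc ∑' m, F m ≤ ∑' m, b₂ * E * g m :=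
          Summable.tsum_le_tsum (fun m => (hbound m).2) hFsum
            ((hgsum.mul_left (b₂ * E)).congr (fun m => by ring))
      _ = b₂ * E * ∑' m, g m := by
          rw [show (fun m => b₂ * E * g m) = fun m => (b₂ * E) * g m from rfl, tsum_mul_left]
      _ ≤ b₂ * E * (8 * (Real.sqrt c)⁻¹) := by
          apply mul_le_mul_of_nonneg_left hgup (by positivity)
  have htsum_lo : b₁ * E * (Real.exp (-1) / 2 * (Real.sqrt c)⁻¹) ≤ ∑' m, F m := by
    calc b₁ * E * (Real.exp (-1) / 2 * (Real.sqrt c)⁻¹)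
        ≤ b₁ * E * ∑' m, g m := mul_le_mul_of_nonneg_left hglo (by positivity)
      _ = ∑' m, b₁ * E * g m := by
          rw [show (fun m => b₁ * E * g m) = fun m => (b₁ * E) * g m from rfl, tsum_mul_left]
      _ ≤ ∑' m, F m :=
          Summable.tsum_le_tsum (fun m => (hbound m).1)
            ((hgsum.mul_left (b₁ * E)).congr (fun m => by ring)) hFsum
  -- convert (√c)⁻¹ to t ^ (-1/2)
  set P : ℝ := t ^ (-(1:ℝ) / 2) with hPdef
  have hP : 0 < P := Real.rpow_pos_of_pos ht0 _
  have hsqrtc : (Real.sqrt c)⁻¹ = 2 * P := by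
    rw [hcdef, show t / 4 = t / (2^2) by norm_num, Real.sqrt_div ht0.le,
      Real.sqrt_sq (by norm_num : (0:ℝ) ≤ 2)]
    rw [hPdef, show (-(1:ℝ)/2) = -(1/2 : ℝ) by norm_num, Real.rpow_neg ht0.le,
      ← Real.sqrt_eq_rpow]
    rw [div_eq_mul_inv, mul_inv, inv_inv, mul_comm]
  have hexp : 0 < Real.exp (k / t) := Real.exp_pos _
  constructor
  · have key : C₁ * P * Real.exp (k / t) ≤ ∑' m, F m := by
      calc C₁ * P * Real.exp (k / t)
          = b₁ * E * (Real.exp (-1) / 2 * (Real.sqrt c)⁻¹) := by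
            rw [hsqrtc, hC₁def, hEdef]; ring
        _ ≤ ∑' m, F m := htsum_lo
    have hC₁P : 0 < C₁ * P := by positivity
    have expand : C₁ * P * (Real.exp (k / t) - 1) =
        C₁ * P * Real.exp (k / t) - C₁ * P := by ring
    linarith
  · have key : ∑' m, F m ≤ 16 * b₂ * Real.exp (-(2 * L)) * P * Real.exp (k / t) := by
      calc ∑' m, F m ≤ b₂ * E * (8 * (Real.sqrt c)⁻¹) := htsum_up
        _ = 16 * b₂ * Real.exp (-(2 * L)) * P * Real.exp (k / t) := by
            rw [hsqrtc, hEdef]; ring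
    have hPE : 0 < P * Real.exp (k / t) := by positivity
    have expand : (16 * b₂ * Real.exp (-(2 * L)) + 1) * P * Real.exp (k / t) =
        16 * b₂ * Real.exp (-(2 * L)) * P * Real.exp (k / t) + P * Real.exp (k / t) := by ring
    linarith
end

section
/- Let (v^n_{ij}) be a square-summable family of complex numbers indexed by half-integers n ≥ 0 and i, j ∈ {-n,...,n}, and let B(n₀,n,p;i₀,j₀,i,j) be real coefficients satisfying ∑_{p=|n-n₀|}^{n+n₀} B(n₀,n,p;i₀,j₀,i,j)² ≤ C² for all n,i,j (fixed n₀,i₀,j₀). Then ∑_{p,i,j} |∑_{n : |n-n₀| ≤ p ≤ n+n₀} v^n_{ij} B(n₀,n,p;i₀,j₀,i,j)(p-n)|² ≤ (2n₀+1)·n₀²·C² · ∑_{n,i,j} |v^n_{ij}|². -/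
open Finset

/-- Half-integer indices n, p, n₀ are encoded by their doubles N, P, N₀ : ℕ, and matrix element
labels i, j by elements of ℤ (the relevant families vanish outside the admissible range, so we
index by all of ℕ × ℤ × ℤ).  Let (v N i j) be a square-summable family of complex numbers and
let B N P i j be real coefficients satisfying, for all N, i, j,
∑_{P : |n-n₀| ≤ p ≤ n+n₀, matching parity} (B N P i j)² ≤ C².  Then
∑_{p,i,j} |∑_{n : |n-n₀| ≤ p ≤ n+n₀} v^n_{ij} B(n₀,n,p;i₀,j₀,i,j)(p-n)|²
  ≤ (2n₀+1)·n₀²·C²·∑_{n,i,j} |v^n_{ij}|²,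
where 2n₀+1 = N₀+1, n₀ = N₀/2 and p - n = (P-N)/2. -/
theorem stmt16 (N₀ : ℕ) (i₀ j₀ : ℤ) (C : ℝ) (hC : 0 ≤ C)
    (v : ℕ → ℤ → ℤ → ℂ) (B : ℕ → ℕ → ℤ → ℤ → ℝ)
    (hv : Summable (fun x : ℕ × ℤ × ℤ => ‖v x.1 x.2.1 x.2.2‖ ^ 2))
    (hB : ∀ N : ℕ, ∀ i j : ℤ,
      ∑ P ∈ (Finset.range (N + N₀ + 1)).filter (fun P : ℕ =>
          |(N : ℤ) - (N₀ : ℤ)| ≤ (P : ℤ) ∧ (P : ℤ) ≤ (N : ℤ) + (N₀ : ℤ) ∧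
            (N + P + N₀) % 2 = 0),
        (B N P i j) ^ 2 ≤ C ^ 2) :
    (∑' x : ℕ × ℤ × ℤ,
        ‖∑ N ∈ (Finset.range (x.1 + N₀ + 1)).filter (fun N : ℕ =>
              |(N : ℤ) - (N₀ : ℤ)| ≤ (x.1 : ℤ) ∧ (x.1 : ℤ) ≤ (N : ℤ) + (N₀ : ℤ) ∧
                (N + x.1 + N₀) % 2 = 0),
            v N x.2.1 x.2.2 * (B N x.1 x.2.1 x.2.2 : ℂ) *
              ((((x.1 : ℝ) - (N : ℝ)) / 2 : ℝ) : ℂ)‖ ^ 2) ≤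
      ((N₀ : ℝ) + 1) * ((N₀ : ℝ) / 2) ^ 2 * C ^ 2 *
        ∑' x : ℕ × ℤ × ℤ, ‖v x.1 x.2.1 x.2.2‖ ^ 2 := by
  classical
  -- notation
  set cond : ℕ → ℕ → Prop := fun N P =>
    |(N : ℤ) - (N₀ : ℤ)| ≤ (P : ℤ) ∧ (P : ℤ) ≤ (N : ℤ) + (N₀ : ℤ) ∧
      (N + P + N₀) % 2 = 0 with hcond
  have T0 : (0:ℝ) ≤ ∑' x : ℕ × ℤ × ℤ, ‖v x.1 x.2.1 x.2.2‖ ^ 2 :=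
    tsum_nonneg fun x => by positivity
  set K : ℝ := ((N₀ : ℝ) + 1) * ((N₀ : ℝ) / 2) ^ 2 with hK
  have hK0 : 0 ≤ K := by positivity
  -- the sets of admissible N for a given P
  set S : ℕ → Finset ℕ := fun P => (Finset.range (P + N₀ + 1)).filter (fun N => cond N P)
    with hS
  -- cardinality bound
  have cardS : ∀ P, (S P).card ≤ N₀ + 1 := by
    intro P
    have := Finset.card_le_card_of_injOn (s := S P) (t := Finset.range (N₀ + 1))
      (fun N => (P + N₀ - N) / 2) ?_ ?_
    · simpa using this
    · intro N hN
      simp only [Finset.mem_coe, hS, Finset.mem_filter, Finset.mem_range, hcond] at hN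
      obtain ⟨-, h1, h2, h3⟩ := hN
      rw [abs_le] at h1
      simp only [Finset.mem_coe, Finset.mem_range]
      omega
    · intro a ha b hb hab
      simp only [hS, Finset.coe_filter, Set.mem_setOf_eq, Finset.mem_range, hcond] at ha hb
      obtain ⟨-, h1, h2, h3⟩ := ha
      obtain ⟨-, h1', h2', h3'⟩ := hb
      rw [abs_le] at h1 h1'
      simp only at hab
      omega
  -- pointwise Cauchy–Schwarz
  have CS : ∀ x : ℕ × ℤ × ℤ,
      ‖∑ N ∈ S x.1, v N x.2.1 x.2.2 * (B N x.1 x.2.1 x.2.2 : ℂ) *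
          ((((x.1 : ℝ) - (N : ℝ)) / 2 : ℝ) : ℂ)‖ ^ 2
        ≤ K * ∑ N ∈ S x.1, ‖v N x.2.1 x.2.2‖ ^ 2 * (B N x.1 x.2.1 x.2.2) ^ 2 := by
    intro ⟨P, i, j⟩
    simp only
    calc ‖∑ N ∈ S P, v N i j * (B N P i j : ℂ) * ((((P:ℝ) - (N:ℝ)) / 2 : ℝ) : ℂ)‖ ^ 2
        ≤ (∑ N ∈ S P, ‖v N i j * (B N P i j : ℂ) * ((((P:ℝ) - (N:ℝ)) / 2 : ℝ) : ℂ)‖) ^ 2 := by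
          have := norm_sum_le (S P)
            (fun N => v N i j * (B N P i j : ℂ) * ((((P:ℝ) - (N:ℝ)) / 2 : ℝ) : ℂ))
          exact pow_le_pow_left₀ (norm_nonneg _) this 2
      _ ≤ (S P).card * ∑ N ∈ S P,
            ‖v N i j * (B N P i j : ℂ) * ((((P:ℝ) - (N:ℝ)) / 2 : ℝ) : ℂ)‖ ^ 2 :=
          sq_sum_le_card_mul_sum_sq
      _ ≤ ((N₀:ℝ) + 1) * ∑ N ∈ S P,
            ((N₀:ℝ)/2)^2 * (‖v N i j‖ ^ 2 * (B N P i j) ^ 2) := by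
          apply mul_le_mul
          · exact_mod_cast cardS P
          · apply Finset.sum_le_sum
            intro N hN
            simp only [hS, Finset.mem_filter, Finset.mem_range, hcond] at hN
            obtain ⟨-, h1, h2, h3⟩ := hN
            rw [abs_le] at h1
            have hz1 : -((N₀:ℤ)) ≤ (P:ℤ) - (N:ℤ) := by omega
            have hz2 : (P:ℤ) - (N:ℤ) ≤ (N₀:ℤ) := by omega
            have h4 : ((P:ℝ) - (N:ℝ))^2 ≤ ((N₀:ℝ))^2 := by
              apply sq_le_sq'
              · exact_mod_cast hz1
              · exact_mod_cast hz2
            have h5 : (((P:ℝ)-(N:ℝ))/2)^2 ≤ ((N₀:ℝ)/2)^2 := by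
              rw [div_pow, div_pow]
              linarith
            calc ‖v N i j * (B N P i j : ℂ) * ((((P:ℝ) - (N:ℝ)) / 2 : ℝ) : ℂ)‖ ^ 2
                = ‖v N i j‖^2 * (B N P i j)^2 * (((P:ℝ) - (N:ℝ))/2)^2 := by
                  rw [norm_mul, norm_mul, mul_pow, mul_pow, Complex.norm_real,
                    Complex.norm_real, Real.norm_eq_abs, Real.norm_eq_abs, sq_abs, sq_abs]
              _ ≤ ‖v N i j‖^2 * (B N P i j)^2 * ((N₀:ℝ)/2)^2 := by
                  have : (0:ℝ) ≤ ‖v N i j‖^2 * (B N P i j)^2 := by positivity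
                  exact mul_le_mul_of_nonneg_left h5 this
              _ = ((N₀:ℝ)/2)^2 * (‖v N i j‖ ^ 2 * (B N P i j) ^ 2) := by ring
          · positivity
          · positivity
      _ = K * ∑ N ∈ S P, ‖v N i j‖ ^ 2 * (B N P i j) ^ 2 := by
          rw [Finset.mul_sum, Finset.mul_sum, hK]
          congr 1; ext N; ring
  -- bound for arbitrary finite partial sums of the weighted squares
  have hmain : ∀ s : Finset (ℕ × ℤ × ℤ),
      (∑ x ∈ s, ∑ N ∈ S x.1, ‖v N x.2.1 x.2.2‖ ^ 2 * (B N x.1 x.2.1 x.2.2) ^ 2)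
        ≤ C ^ 2 * ∑' x : ℕ × ℤ × ℤ, ‖v x.1 x.2.1 x.2.2‖ ^ 2 := by
    intro s
    set M := (s.sup fun x => x.1) + N₀ + 1 with hM
    have hgM : ∀ x ∈ s, (∑ N ∈ S x.1, ‖v N x.2.1 x.2.2‖ ^ 2 * (B N x.1 x.2.1 x.2.2) ^ 2)
        = ∑ N ∈ Finset.range M,
            if cond N x.1 then ‖v N x.2.1 x.2.2‖ ^ 2 * (B N x.1 x.2.1 x.2.2) ^ 2 else 0 := by
      intro x hx
      rw [hS]
      simp only
      rw [Finset.sum_filter]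
      apply Finset.sum_subset
      · apply Finset.range_subset_range.2
        have : x.1 ≤ s.sup (fun x => x.1) := Finset.le_sup hx
        omega
      · intro N hN1 hN2
        rw [if_neg]
        intro hc
        rw [hcond] at hc
        obtain ⟨hc1, -, -⟩ := hc
        rw [abs_le] at hc1
        simp only [Finset.mem_range, not_lt] at hN2
        omega
    calc (∑ x ∈ s, ∑ N ∈ S x.1, ‖v N x.2.1 x.2.2‖ ^ 2 * (B N x.1 x.2.1 x.2.2) ^ 2)
        = ∑ x ∈ s, ∑ N ∈ Finset.range M,
            if cond N x.1 then ‖v N x.2.1 x.2.2‖ ^ 2 * (B N x.1 x.2.1 x.2.2) ^ 2 else 0 :=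
          Finset.sum_congr rfl hgM
      _ = ∑ N ∈ Finset.range M, ∑ x ∈ s,
            if cond N x.1 then ‖v N x.2.1 x.2.2‖ ^ 2 * (B N x.1 x.2.1 x.2.2) ^ 2 else 0 :=
          Finset.sum_comm
      _ ≤ ∑ N ∈ Finset.range M, ∑ ij ∈ s.image Prod.snd, C ^ 2 * ‖v N ij.1 ij.2‖ ^ 2 := by
          apply Finset.sum_le_sum
          intro N _
          rw [← Finset.sum_fiberwise_of_maps_to (g := Prod.snd) (t := s.image Prod.snd)
            (fun x hx => Finset.mem_image_of_mem _ hx)]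
          apply Finset.sum_le_sum
          intro ij hij
          have hrw : ∀ x ∈ s.filter (fun x => x.2 = ij),
              (if cond N x.1 then ‖v N x.2.1 x.2.2‖ ^ 2 * (B N x.1 x.2.1 x.2.2) ^ 2 else 0)
                = (if cond N x.1 then ‖v N ij.1 ij.2‖ ^ 2 * (B N x.1 ij.1 ij.2) ^ 2 else 0) := by
            intro x hx
            rw [Finset.mem_filter] at hx
            rw [hx.2]
          rw [Finset.sum_congr rfl hrw]
          have hinj : ∀ x ∈ s.filter (fun x => x.2 = ij), ∀ y ∈ s.filter (fun x => x.2 = ij),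
              x.1 = y.1 → x = y := by
            intro x hx y hy hxy
            rw [Finset.mem_filter] at hx hy
            exact Prod.ext hxy (hx.2.trans hy.2.symm)
          rw [← Finset.sum_image (g := Prod.fst) (f := fun P =>
            if cond N P then ‖v N ij.1 ij.2‖ ^ 2 * (B N P ij.1 ij.2) ^ 2 else 0) hinj]
          calc (∑ P ∈ (s.filter (fun x => x.2 = ij)).image Prod.fst,
                if cond N P then ‖v N ij.1 ij.2‖ ^ 2 * (B N P ij.1 ij.2) ^ 2 else 0)
              = ∑ P ∈ ((s.filter (fun x => x.2 = ij)).image Prod.fst).filter (fun P => cond N P),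
                  ‖v N ij.1 ij.2‖ ^ 2 * (B N P ij.1 ij.2) ^ 2 := (Finset.sum_filter _ _).symm
            _ = ‖v N ij.1 ij.2‖ ^ 2 * ∑ P ∈ ((s.filter (fun x => x.2 = ij)).image
                  Prod.fst).filter (fun P => cond N P), (B N P ij.1 ij.2) ^ 2 := by
                rw [Finset.mul_sum]
            _ ≤ ‖v N ij.1 ij.2‖ ^ 2 * ∑ P ∈ (Finset.range (N + N₀ + 1)).filter
                  (fun P : ℕ => |(N : ℤ) - (N₀ : ℤ)| ≤ (P : ℤ) ∧ (P : ℤ) ≤ (N : ℤ) + (N₀ : ℤ) ∧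
                    (N + P + N₀) % 2 = 0), (B N P ij.1 ij.2) ^ 2 := by
                apply mul_le_mul_of_nonneg_left ?_ (by positivity)
                apply Finset.sum_le_sum_of_subset_of_nonneg
                · intro P hP
                  rw [Finset.mem_filter] at hP
                  have hc := hP.2
                  rw [hcond] at hc
                  obtain ⟨hc1, hc2, hc3⟩ := hc
                  rw [Finset.mem_filter, Finset.mem_range]
                  refine ⟨by omega, hc1, hc2, hc3⟩
                · intro P _ _
                  positivity
            _ ≤ ‖v N ij.1 ij.2‖ ^ 2 * C ^ 2 :=
                mul_le_mul_of_nonneg_left (hB N ij.1 ij.2) (by positivity)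
            _ = C ^ 2 * ‖v N ij.1 ij.2‖ ^ 2 := mul_comm _ _
      _ = C ^ 2 * ∑ y ∈ Finset.range M ×ˢ s.image Prod.snd, ‖v y.1 y.2.1 y.2.2‖ ^ 2 := by
          rw [Finset.sum_product, Finset.mul_sum]
          congr 1
          ext N
          rw [Finset.mul_sum]
      _ ≤ C ^ 2 * ∑' x : ℕ × ℤ × ℤ, ‖v x.1 x.2.1 x.2.2‖ ^ 2 := by
          apply mul_le_mul_of_nonneg_left ?_ (by positivity)
          exact Summable.sum_le_tsum _ (fun x _ => by positivity) hv
  -- conclude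
  refine tsum_le_of_sum_le' (mul_nonneg (by positivity) T0) fun s => ?_
  calc (∑ x ∈ s,
        ‖∑ N ∈ (Finset.range (x.1 + N₀ + 1)).filter (fun N : ℕ =>
              |(N : ℤ) - (N₀ : ℤ)| ≤ (x.1 : ℤ) ∧ (x.1 : ℤ) ≤ (N : ℤ) + (N₀ : ℤ) ∧
                (N + x.1 + N₀) % 2 = 0),
            v N x.2.1 x.2.2 * (B N x.1 x.2.1 x.2.2 : ℂ) *
              ((((x.1 : ℝ) - (N : ℝ)) / 2 : ℝ) : ℂ)‖ ^ 2)
      ≤ ∑ x ∈ s, K * ∑ N ∈ S x.1, ‖v N x.2.1 x.2.2‖ ^ 2 * (B N x.1 x.2.1 x.2.2) ^ 2 :=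
        Finset.sum_le_sum fun x _ => CS x
    _ = K * ∑ x ∈ s, ∑ N ∈ S x.1, ‖v N x.2.1 x.2.2‖ ^ 2 * (B N x.1 x.2.1 x.2.2) ^ 2 :=
        (Finset.mul_sum _ _ _).symm
    _ ≤ K * (C ^ 2 * ∑' x : ℕ × ℤ × ℤ, ‖v x.1 x.2.1 x.2.2‖ ^ 2) :=
        mul_le_mul_of_nonneg_left (hmain s) hK0
    _ = ((N₀ : ℝ) + 1) * ((N₀ : ℝ) / 2) ^ 2 * C ^ 2 *
          ∑' x : ℕ × ℤ × ℤ, ‖v x.1 x.2.1 x.2.2‖ ^ 2 := by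
        rw [hK]; ring
end
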